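/- Let d ≥ 1 and let H be a complex symmetric d × d matrix whose imaginary part Im H (the real symmetric matrix of imaginary parts of the entries) is positive definite. Let ρ, K, c > 0 and let ψ : ℝ^d → ℂ be a continuous function such that |ψ(z) − (1/2)⟨Hz, z⟩| ≤ K‖z‖³ and Im ψ(z) ≥ c‖z‖² for all z with ‖z‖ ≤ ρ, where ⟨Hz, z⟩ = ∑_{a,b} H_{ab} z_a z_b. Let B : ℝ^d → ℂ be a continuous function whose support is contained in the closed ball of radius ρ centered at 0. Then lim_{τ → ∞} τ^{d/2} ∫_{ℝ^d} e^{iτψ(z)} B(z) dz = B(0) · ∫_{ℝ^d} e^{(i/2)⟨Hz, z⟩} dz. -/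

import Mathlib

open MeasureTheory Filter

/-- The complex quadratic form `⟨Hz, z⟩ = ∑_{a,b} H_{ab} z_a z_b` associated with a complex
`d × d` matrix `H`, evaluated on a real vector `z`. -/
noncomputable def quadForm {d : ℕ} (H : Matrix (Fin d) (Fin d) ℂ)
    (z : EuclideanSpace ℝ (Fin d)) : ℂ :=
  ∑ a, ∑ b, H a b * (z a : ℂ) * (z b : ℂ)

lemma quadForm_smul {d : ℕ} (H : Matrix (Fin d) (Fin d) ℂ) (r : ℝ)
    (z : EuclideanSpace ℝ (Fin d)) :
    quadForm H (r • z) = (r : ℂ) ^ 2 * quadForm H z := by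
  simp only [quadForm, Finset.mul_sum]
  refine Finset.sum_congr rfl fun a _ => Finset.sum_congr rfl fun b _ => ?_
  have h : ∀ i, (((r • z) i : ℝ) : ℂ) = (r : ℂ) * (z i : ℂ) := fun i => by
    have : (r • z) i = r * z i := rfl
    rw [this]; push_cast; ring
  rw [h a, h b]; ring

theorem stmt_6 (d : ℕ) (hd : 1 ≤ d) (H : Matrix (Fin d) (Fin d) ℂ) (hH_symm : H.IsSymm)
    (hH_im : (H.map Complex.im).PosDef)
    (ρ K c : ℝ) (hρ : 0 < ρ) (hK : 0 < K) (hc : 0 < c)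
    (ψ : EuclideanSpace ℝ (Fin d) → ℂ) (hψ_cont : Continuous ψ)
    (hψ_taylor : ∀ z : EuclideanSpace ℝ (Fin d), ‖z‖ ≤ ρ →
      ‖ψ z - (1 / 2) * quadForm H z‖ ≤ K * ‖z‖ ^ 3)
    (hψ_im : ∀ z : EuclideanSpace ℝ (Fin d), ‖z‖ ≤ ρ → c * ‖z‖ ^ 2 ≤ (ψ z).im)
    (B : EuclideanSpace ℝ (Fin d) → ℂ) (hB_cont : Continuous B)
    (hB_supp : Function.support B ⊆ Metric.closedBall 0 ρ) :
    Tendsto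
      (fun τ : ℝ => (τ ^ ((d : ℝ) / 2)) •
        ∫ z : EuclideanSpace ℝ (Fin d), Complex.exp (Complex.I * τ * ψ z) * B z)
      atTop
      (nhds (B 0 * ∫ z : EuclideanSpace ℝ (Fin d),
        Complex.exp ((Complex.I / 2) * quadForm H z))) := by
  classical
  have hBc : HasCompactSupport B :=
    HasCompactSupport.intro (isCompact_closedBall (0 : EuclideanSpace ℝ (Fin d)) ρ)
      (fun x hx => by
        by_contra h
        exact hx (hB_supp (Function.mem_support.mpr h)))
  obtain ⟨M, hM⟩ := hBc.exists_bound_of_continuous hB_cont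
  have hM0 : 0 ≤ M := le_trans (norm_nonneg _) (hM 0)
  set R : ℝ → ℝ := fun τ => τ ^ (-(1 : ℝ) / 2) with hRdef
  have hR_pos : ∀ {τ : ℝ}, 0 < τ → 0 < R τ := fun hτ => Real.rpow_pos_of_pos hτ _
  have hRsq : ∀ {τ : ℝ}, 0 < τ → τ * R τ ^ 2 = 1 := by
    intro τ hτ
    have h1 : R τ ^ 2 = τ ^ (-(1 : ℝ)) := by
      rw [hRdef]
      rw [← Real.rpow_natCast (τ ^ (-(1 : ℝ) / 2)) 2, ← Real.rpow_mul hτ.le]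
      norm_num
    rw [h1, Real.rpow_neg_one τ, mul_inv_cancel₀ hτ.ne']
  have hR3 : ∀ {τ : ℝ}, 0 < τ → τ * R τ ^ 3 = τ ^ (-(1 : ℝ) / 2) := by
    intro τ hτ
    have h1 : R τ ^ 3 = τ ^ (-(3 : ℝ) / 2) := by
      rw [hRdef, ← Real.rpow_natCast (τ ^ (-(1 : ℝ) / 2)) 3, ← Real.rpow_mul hτ.le]
      norm_num
    calc τ * R τ ^ 3 = τ ^ (1 : ℝ) * τ ^ (-(3 : ℝ) / 2) := by rw [h1, Real.rpow_one]
    _ = τ ^ ((1 : ℝ) + -(3 : ℝ) / 2) := (Real.rpow_add hτ _ _).symm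
    _ = τ ^ (-(1 : ℝ) / 2) := by norm_num
  -- change of variables
  have key : ∀ τ : ℝ, 0 < τ →
      (∫ z : EuclideanSpace ℝ (Fin d),
          Complex.exp (Complex.I * τ * ψ (R τ • z)) * B (R τ • z))
        = (τ ^ ((d : ℝ) / 2)) •
          ∫ z : EuclideanSpace ℝ (Fin d), Complex.exp (Complex.I * τ * ψ z) * B z := by
    intro τ hτ
    rw [MeasureTheory.Measure.integral_comp_smul volume
      (fun z => Complex.exp (Complex.I * τ * ψ z) * B z) (R τ)]
    congr 1
    rw [finrank_euclideanSpace_fin]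
    have h1 : R τ ^ d = τ ^ (-(1 : ℝ) / 2 * d) := by
      rw [hRdef, ← Real.rpow_natCast (τ ^ (-(1 : ℝ) / 2)) d, ← Real.rpow_mul hτ.le]
    rw [h1, ← Real.rpow_neg hτ.le, abs_of_pos (Real.rpow_pos_of_pos hτ _)]
    congr 1
    ring
  -- pointwise limit
  have h_lim : ∀ z : EuclideanSpace ℝ (Fin d),
      Tendsto (fun τ : ℝ => Complex.exp (Complex.I * τ * ψ (R τ • z)) * B (R τ • z)) atTop
        (nhds (Complex.exp ((Complex.I / 2) * quadForm H z) * B 0)) := by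
    intro z
    have hR0 : Tendsto R atTop (nhds 0) := by
      have := tendsto_rpow_neg_atTop (y := (1 : ℝ) / 2) (by norm_num)
      simpa [hRdef, neg_div] using this
    have hRz : Tendsto (fun τ => R τ • z) atTop (nhds (0 : EuclideanSpace ℝ (Fin d))) := by
      simpa using hR0.smul_const z
    have hD : Tendsto (fun τ : ℝ => (τ : ℂ) * ψ (R τ • z) - (1 / 2 : ℂ) * quadForm H z)
        atTop (nhds 0) := by
      have hg : Tendsto (fun τ : ℝ => K * ‖z‖ ^ 3 * τ ^ (-(1 : ℝ) / 2)) atTop (nhds 0) := by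
        have := (tendsto_rpow_neg_atTop (y := (1 : ℝ) / 2) (by norm_num)).const_mul
          (K * ‖z‖ ^ 3)
        simpa [neg_div] using this
      refine squeeze_zero_norm' ?_ hg
      have h1 : ∀ᶠ τ : ℝ in atTop, ‖R τ • z‖ ≤ ρ := by
        have h2 : Tendsto (fun τ => ‖R τ • z‖) atTop (nhds 0) := by
          simpa using hRz.norm
        exact (h2.eventually_lt_const hρ).mono fun τ h => h.le
      filter_upwards [h1, eventually_gt_atTop (0 : ℝ)] with τ hτρ hτ0
      have hw : quadForm H (R τ • z) = ((R τ : ℝ) : ℂ) ^ 2 * quadForm H z :=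
        quadForm_smul H (R τ) z
      have hτR : ((τ : ℝ) : ℂ) * ((R τ : ℝ) : ℂ) ^ 2 = 1 := by
        have h := hRsq hτ0
        calc ((τ : ℝ) : ℂ) * ((R τ : ℝ) : ℂ) ^ 2 = ((τ * R τ ^ 2 : ℝ) : ℂ) := by
              push_cast; ring
        _ = 1 := by rw [h]; norm_num
      have hDeq : (τ : ℂ) * ψ (R τ • z) - (1 / 2 : ℂ) * quadForm H z
          = (τ : ℂ) * (ψ (R τ • z) - (1 / 2 : ℂ) * quadForm H (R τ • z)) := by
        rw [hw]
        have h3 : (τ : ℂ) * ((1 / 2 : ℂ) * (((R τ : ℝ) : ℂ) ^ 2 * quadForm H z))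
            = (1 / 2 : ℂ) * quadForm H z := by
          calc (τ : ℂ) * ((1 / 2 : ℂ) * (((R τ : ℝ) : ℂ) ^ 2 * quadForm H z))
              = ((τ : ℂ) * ((R τ : ℝ) : ℂ) ^ 2) * ((1 / 2 : ℂ) * quadForm H z) := by ring
          _ = (1 / 2 : ℂ) * quadForm H z := by rw [hτR]; ring
        rw [mul_sub, h3]
      rw [hDeq, norm_mul]
      have habs : ‖ψ (R τ • z) - (1 / 2 : ℂ) * quadForm H (R τ • z)‖ ≤ K * ‖R τ • z‖ ^ 3 :=
        hψ_taylor (R τ • z) hτρ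
      have hnτ : ‖(τ : ℂ)‖ = τ := by
        rw [Complex.norm_real, Real.norm_eq_abs, abs_of_pos hτ0]
      have hnw : ‖R τ • z‖ = R τ * ‖z‖ := by
        rw [norm_smul, Real.norm_eq_abs, abs_of_pos (hR_pos hτ0)]
      calc ‖(τ : ℂ)‖ * ‖ψ (R τ • z) - (1 / 2 : ℂ) * quadForm H (R τ • z)‖
          ≤ τ * (K * ‖R τ • z‖ ^ 3) := by
            rw [hnτ]; exact mul_le_mul_of_nonneg_left habs hτ0.le
      _ = K * ‖z‖ ^ 3 * (τ * R τ ^ 3) := by rw [hnw]; ring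
      _ = K * ‖z‖ ^ 3 * τ ^ (-(1 : ℝ) / 2) := by rw [hR3 hτ0]
    have hexp : Tendsto (fun τ : ℝ => Complex.exp (Complex.I * τ * ψ (R τ • z))) atTop
        (nhds (Complex.exp ((Complex.I / 2) * quadForm H z))) := by
      have h1 : Tendsto (fun τ : ℝ =>
          Complex.I * ((τ : ℂ) * ψ (R τ • z) - (1 / 2 : ℂ) * quadForm H z)
            + (Complex.I / 2) * quadForm H z) atTop
          (nhds (Complex.I * 0 + (Complex.I / 2) * quadForm H z)) :=
        (hD.const_mul Complex.I).add tendsto_const_nhds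
      have h2 := (Complex.continuous_exp.tendsto _).comp h1
      simp only [mul_zero, zero_add] at h2
      refine h2.congr fun τ => ?_
      simp only [Function.comp]
      congr 1
      ring
    exact hexp.mul ((hB_cont.tendsto 0).comp hRz)
  -- Gaussian domination
  have hgauss : Integrable (fun z : EuclideanSpace ℝ (Fin d) => Real.exp (-c * ‖z‖ ^ 2)) := by
    have h := (GaussianFourier.integrable_cexp_neg_mul_sq_norm_add
      (V := EuclideanSpace ℝ (Fin d)) (b := (c : ℂ)) (by simpa using hc) 0 0).norm
    refine h.congr (Filter.Eventually.of_forall fun z => ?_)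
    simp [Complex.norm_exp]
    norm_cast
    exact Or.inl rfl
  have hlim : Tendsto (fun τ : ℝ => ∫ z : EuclideanSpace ℝ (Fin d),
      Complex.exp (Complex.I * τ * ψ (R τ • z)) * B (R τ • z)) atTop
      (nhds (∫ z : EuclideanSpace ℝ (Fin d),
        Complex.exp ((Complex.I / 2) * quadForm H z) * B 0)) := by
    refine tendsto_integral_filter_of_dominated_convergence
      (fun z => M * Real.exp (-c * ‖z‖ ^ 2)) ?_ ?_ (hgauss.const_mul M) ?_
    · filter_upwards with τ
      exact (((Complex.continuous_exp.comp
        (continuous_const.mul (hψ_cont.comp (continuous_const_smul (R τ))))).mul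
        (hB_cont.comp (continuous_const_smul (R τ))))).aestronglyMeasurable
    · filter_upwards [eventually_gt_atTop (0 : ℝ)] with τ hτ
      refine Eventually.of_forall fun z => ?_
      rw [norm_mul]
      by_cases hcase : ‖R τ • z‖ ≤ ρ
      · have hre : (Complex.I * τ * ψ (R τ • z)).re = -(τ * (ψ (R τ • z)).im) := by
          simp [Complex.mul_re, Complex.mul_im]
        have h1 : ‖Complex.exp (Complex.I * τ * ψ (R τ • z))‖ ≤ Real.exp (-c * ‖z‖ ^ 2) := by
          rw [Complex.norm_exp, hre]
          apply Real.exp_le_exp.mpr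
          have h2 := hψ_im _ hcase
          have hnw : ‖R τ • z‖ ^ 2 = R τ ^ 2 * ‖z‖ ^ 2 := by
            rw [norm_smul, Real.norm_eq_abs, abs_of_pos (hR_pos hτ), mul_pow]
          have h3 : τ * (c * ‖R τ • z‖ ^ 2) = c * ‖z‖ ^ 2 := by
            rw [hnw]
            calc τ * (c * (R τ ^ 2 * ‖z‖ ^ 2)) = c * ‖z‖ ^ 2 * (τ * R τ ^ 2) := by ring
            _ = c * ‖z‖ ^ 2 := by rw [hRsq hτ]; ring
          have h4 := mul_le_mul_of_nonneg_left h2 hτ.le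
          linarith
        calc ‖Complex.exp (Complex.I * τ * ψ (R τ • z))‖ * ‖B (R τ • z)‖
            ≤ Real.exp (-c * ‖z‖ ^ 2) * M :=
              mul_le_mul h1 (hM _) (norm_nonneg _) (Real.exp_nonneg _)
        _ = M * Real.exp (-c * ‖z‖ ^ 2) := mul_comm _ _
      · have hB0 : B (R τ • z) = 0 := by
          by_contra h
          exact hcase (by simpa using hB_supp (Function.mem_support.mpr h))
        rw [hB0, norm_zero, mul_zero]
        positivity
    · exact Eventually.of_forall h_lim
  have hfinal : (∫ z : EuclideanSpace ℝ (Fin d),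
      Complex.exp ((Complex.I / 2) * quadForm H z) * B 0)
      = B 0 * ∫ z : EuclideanSpace ℝ (Fin d), Complex.exp ((Complex.I / 2) * quadForm H z) := by
    rw [integral_mul_const]; ring
  rw [hfinal] at hlim
  refine Tendsto.congr' ?_ hlim
  filter_upwards [eventually_gt_atTop (0 : ℝ)] with τ hτ
  exact key τ hτ
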